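/- Let 0<q₁<1 and 0<q₂<1, let β,δ>0, μ,ν>0 and η,ζ>−1 be real parameters, let u : [0,∞)→[0,∞) be continuous, and let f,g,h : [0,∞)→ℝ be continuous pairwise synchronous functions satisfying ψ ≤ f(x) ≤ Ψ, φ ≤ g(x) ≤ Φ and ω ≤ h(x) ≤ Ω for all x ∈ [0,∞), where ψ,Ψ,φ,Φ,ω,Ω are real constants. Then for all t>0: | I_{q₁}^{η,μ,β}{u·f·g·h}(t)·I_{q₂}^{ζ,ν,δ}{u}(t) + I_{q₁}^{η,μ,β}{u·h}(t)·I_{q₂}^{ζ,ν,δ}{u·f·g}(t) + I_{q₁}^{η,μ,β}{u·g}(t)·I_{q₂}^{ζ,ν,δ}{u·f·h}(t) + I_{q₁}^{η,μ,β}{u·f}(t)·I_{q₂}^{ζ,ν,δ}{u·g·h}(t) − I_{q₁}^{η,μ,β}{u·g·h}(t)·I_{q₂}^{ζ,ν,δ}{u·f}(t) − I_{q₁}^{η,μ,β}{u·f·h}(t)·I_{q₂}^{ζ,ν,δ}{u·g}(t) − I_{q₁}^{η,μ,β}{u·f·g}(t)·I_{q₂}^{ζ,ν,δ}{u·h}(t)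 − I_{q₁}^{η,μ,β}{u}(t)·I_{q₂}^{ζ,ν,δ}{u·f·g·h}(t) | ≤ I_{q₁}^{η,μ,β}{u}(t)·I_{q₂}^{ζ,ν,δ}{u}(t)·(Ψ−ψ)(Φ−φ)(Ω−ω). -/

import Mathlib

open scoped BigOperators

/-- The q-shifted factorial (a;q)_k = prod_{j<k} (1 - a q^j). -/
noncomputable def qPoch (q a : ℝ) (k : ℕ) : ℝ :=
  ∏ j ∈ Finset.range k, (1 - a * q ^ j)

/-- Generalized Erdélyi–Kober fractional q-integral
    I_q^{η,μ,β}{f}(t) = β(1-q^{1/β})(1-q)^{μ-1} ∑_k ((q^μ;q)_k/(q;q)_k) q^{k(η+1)} f(t q^{k/β}). -/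
noncomputable def EK (q η μ β : ℝ) (f : ℝ → ℝ) (t : ℝ) : ℝ :=
  β * (1 - q ^ (1 / β)) * (1 - q) ^ (μ - 1) *
    ∑' k : ℕ, qPoch q (q ^ μ) k / qPoch q q k * q ^ ((k : ℝ) * (η + 1)) * f (t * q ^ ((k : ℝ) / β))

def Synchronous (f g : ℝ → ℝ) : Prop :=
  ∀ x y : ℝ, 0 ≤ x → 0 ≤ y → 0 ≤ (f x - f y) * (g x - g y)

def Asynchronous (f g : ℝ → ℝ) : Prop :=
  ∀ x y : ℝ, 0 ≤ x → 0 ≤ y → (f x - f y) * (g x - g y) ≤ 0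

private lemma qPoch_pos {q a : ℝ} (hq0 : 0 ≤ q) (hq1 : q ≤ 1) (ha0 : 0 ≤ a) (ha1 : a < 1)
    (k : ℕ) : 0 < qPoch q a k := by
  refine Finset.prod_pos fun j _ => ?_
  have h1 : a * q ^ j ≤ a * 1 := mul_le_mul_of_nonneg_left (pow_le_one₀ hq0 hq1) ha0
  nlinarith

private lemma w_pos {q μ : ℝ} (hq : 0 < q) (hq' : q < 1) (hμ : 0 < μ) (η : ℝ) (k : ℕ) :
    0 < qPoch q (q ^ μ) k / qPoch q q k * q ^ ((k : ℝ) * (η + 1)) :=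
  mul_pos (div_pos
    (qPoch_pos hq.le hq'.le (Real.rpow_nonneg hq.le μ) (Real.rpow_lt_one hq.le hq' hμ) k)
    (qPoch_pos hq.le hq'.le hq.le hq' k)) (Real.rpow_pos_of_pos hq _)

private lemma wSummable {q μ η : ℝ} (hq : 0 < q) (hq' : q < 1) (hμ : 0 < μ) (hη : -1 < η) :
    Summable (fun k : ℕ => qPoch q (q ^ μ) k / qPoch q q k * q ^ ((k : ℝ) * (η + 1))) := by
  have hfac1 : ∀ k : ℕ, 0 < 1 - q ^ μ * q ^ k := by
    intro k
    have h1 : q ^ μ * q ^ k ≤ q ^ μ * 1 :=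
      mul_le_mul_of_nonneg_left (pow_le_one₀ hq.le hq'.le) (Real.rpow_nonneg hq.le μ)
    nlinarith [Real.rpow_lt_one hq.le hq' hμ]
  have hfac2 : ∀ k : ℕ, 0 < 1 - q * q ^ k := by
    intro k
    have h1 : q * q ^ k ≤ q * 1 := mul_le_mul_of_nonneg_left (pow_le_one₀ hq.le hq'.le) hq.le
    nlinarith
  have hw0 : ∀ k : ℕ, 0 < qPoch q (q ^ μ) k / qPoch q q k * q ^ ((k : ℝ) * (η + 1)) :=
    fun k => w_pos hq hq' hμ η k
  have hr₀0 : 0 < q ^ (η + 1) := Real.rpow_pos_of_pos hq _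
  have hr₀1 : q ^ (η + 1) < 1 := Real.rpow_lt_one hq.le hq' (by linarith)
  set r : ℝ := (1 + q ^ (η + 1)) / 2 with hrdef
  have hr1 : r < 1 := by rw [hrdef]; linarith
  have hr0 : 0 < r := by rw [hrdef]; linarith
  have hrr : q ^ (η + 1) < r := by rw [hrdef]; linarith
  apply summable_of_ratio_norm_eventually_le hr1
  have hev : ∀ᶠ k : ℕ in Filter.atTop, q ^ k < (r - q ^ (η + 1)) / r := by
    have ht0 := tendsto_pow_atTop_nhds_zero_of_lt_one hq.le hq'
    exact ht0.eventually_lt_const (div_pos (by linarith) hr0)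
  filter_upwards [hev] with k hk
  rw [Real.norm_of_nonneg (hw0 (k + 1)).le, Real.norm_of_nonneg (hw0 k).le]
  have e1 : qPoch q (q ^ μ) (k + 1) = qPoch q (q ^ μ) k * (1 - q ^ μ * q ^ k) := by
    rw [qPoch, qPoch, Finset.prod_range_succ]
  have e2 : qPoch q q (k + 1) = qPoch q q k * (1 - q * q ^ k) := by
    rw [qPoch, qPoch, Finset.prod_range_succ]
  have ecast : ((k + 1 : ℕ) : ℝ) * (η + 1) = (k : ℝ) * (η + 1) + (η + 1) := by
    push_cast; ring
  rw [e1, e2, ecast, Real.rpow_add hq]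
  have hP1 := qPoch_pos hq.le hq'.le (Real.rpow_nonneg hq.le μ) (Real.rpow_lt_one hq.le hq' hμ) k
  have hP2 := qPoch_pos hq.le hq'.le hq.le hq' k
  have hE : 0 < q ^ ((k : ℝ) * (η + 1)) := Real.rpow_pos_of_pos hq _
  have hkey : (1 - q ^ μ * q ^ k) * q ^ (η + 1) ≤ r * (1 - q * q ^ k) := by
    have h3 : q ^ k * r < r - q ^ (η + 1) := (lt_div_iff₀ hr0).mp hk
    have h4 : q * q ^ k ≤ q ^ k := by nlinarith [pow_nonneg hq.le k]
    nlinarith [mul_nonneg (Real.rpow_nonneg hq.le μ) (pow_nonneg hq.le k), hr₀0.le,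
      pow_nonneg hq.le k]
  have hfrac : qPoch q (q ^ μ) k * (1 - q ^ μ * q ^ k) / (qPoch q q k * (1 - q * q ^ k)) *
        (q ^ ((k : ℝ) * (η + 1)) * q ^ (η + 1))
      = (qPoch q (q ^ μ) k / qPoch q q k * q ^ ((k : ℝ) * (η + 1))) *
        ((1 - q ^ μ * q ^ k) * q ^ (η + 1) / (1 - q * q ^ k)) := by
    field_simp
  rw [hfrac]
  have h5 : (1 - q ^ μ * q ^ k) * q ^ (η + 1) / (1 - q * q ^ k) ≤ r :=
    (div_le_iff₀ (hfac2 k)).mpr hkey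
  calc (qPoch q (q ^ μ) k / qPoch q q k * q ^ ((k : ℝ) * (η + 1))) *
        ((1 - q ^ μ * q ^ k) * q ^ (η + 1) / (1 - q * q ^ k))
      ≤ (qPoch q (q ^ μ) k / qPoch q q k * q ^ ((k : ℝ) * (η + 1))) * r :=
        mul_le_mul_of_nonneg_left h5 (hw0 k).le
    _ = r * (qPoch q (q ^ μ) k / qPoch q q k * q ^ ((k : ℝ) * (η + 1))) := mul_comm _ _


noncomputable def EKpt (q β t : ℝ) (k : ℕ) : ℝ := t * q ^ ((k : ℝ) / β)

noncomputable def EKw (q η μ β : ℝ) (u : ℝ → ℝ) (t : ℝ) (k : ℕ) : ℝ :=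
  β * (1 - q ^ (1 / β)) * (1 - q) ^ (μ - 1) *
    (qPoch q (q ^ μ) k / qPoch q q k * q ^ ((k : ℝ) * (η + 1))) * u (EKpt q β t k)

private lemma EK_self (q η μ β : ℝ) (u : ℝ → ℝ) (t : ℝ) :
    EK q η μ β u t = ∑' k : ℕ, EKw q η μ β u t k := by
  rw [EK, ← tsum_mul_left]
  exact tsum_congr fun k => by simp only [EKw, EKpt]; ring

private lemma EK_mul1 (q η μ β : ℝ) (u f : ℝ → ℝ) (t : ℝ) :
    EK q η μ β (fun s => u s * f s) t = ∑' k : ℕ, EKw q η μ β u t k * f (EKpt q β t k) := by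
  rw [EK, ← tsum_mul_left]
  exact tsum_congr fun k => by simp only [EKw, EKpt]; ring

private lemma EK_mul2 (q η μ β : ℝ) (u f g : ℝ → ℝ) (t : ℝ) :
    EK q η μ β (fun s => u s * f s * g s) t
      = ∑' k : ℕ, EKw q η μ β u t k * (f (EKpt q β t k) * g (EKpt q β t k)) := by
  rw [EK, ← tsum_mul_left]
  exact tsum_congr fun k => by simp only [EKw, EKpt]; ring

private lemma EK_mul3 (q η μ β : ℝ) (u f g h : ℝ → ℝ) (t : ℝ) :
    EK q η μ β (fun s => u s * f s * g s * h s) t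
      = ∑' k : ℕ, EKw q η μ β u t k * (f (EKpt q β t k) * g (EKpt q β t k) * h (EKpt q β t k)) := by
  rw [EK, ← tsum_mul_left]
  exact tsum_congr fun k => by simp only [EKw, EKpt]; ring


private lemma EKw_nonneg {q η μ β t : ℝ} (u : ℝ → ℝ)
    (hq : 0 < q) (hq' : q < 1) (hβ : 0 < β) (hμ : 0 < μ)
    (hu0 : ∀ s : ℝ, 0 ≤ s → 0 ≤ u s) (ht : 0 ≤ t) (k : ℕ) : 0 ≤ EKw q η μ β u t k := by
  have h1 : q ^ (1 / β) ≤ 1 := Real.rpow_le_one hq.le hq'.le (by positivity)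
  have h2 : (0:ℝ) ≤ (1 - q) ^ (μ - 1) := Real.rpow_nonneg (by linarith) _
  have h3 := (w_pos hq hq' hμ η k).le
  have h4 : 0 ≤ u (EKpt q β t k) :=
    hu0 _ (mul_nonneg ht (Real.rpow_nonneg hq.le _))
  have h5 : (0:ℝ) ≤ β * (1 - q ^ (1 / β)) * (1 - q) ^ (μ - 1) :=
    mul_nonneg (mul_nonneg hβ.le (by linarith)) h2
  exact mul_nonneg (mul_nonneg h5 h3) h4

private lemma EKpt_mem {q β t : ℝ} (hq : 0 < q) (hq' : q < 1) (hβ : 0 < β) (ht : 0 < t)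
    (k : ℕ) : EKpt q β t k ∈ Set.Icc 0 t := by
  constructor
  · exact mul_nonneg ht.le (Real.rpow_nonneg hq.le _)
  · have h1 : q ^ ((k : ℝ) / β) ≤ 1 :=
      Real.rpow_le_one hq.le hq'.le (div_nonneg (Nat.cast_nonneg k) hβ.le)
    calc t * q ^ ((k : ℝ) / β) ≤ t * 1 := mul_le_mul_of_nonneg_left h1 ht.le
      _ = t := mul_one t

private lemma EKw_summable {q η μ β t : ℝ} (u : ℝ → ℝ)
    (hq : 0 < q) (hq' : q < 1) (hβ : 0 < β) (hμ : 0 < μ) (hη : -1 < η)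
    (hcu : ContinuousOn u (Set.Ici 0)) (ht : 0 < t) :
    Summable (EKw q η μ β u t) := by
  obtain ⟨U, hU⟩ := (isCompact_Icc (a := (0:ℝ)) (b := t)).exists_bound_of_continuousOn
    (hcu.mono Set.Icc_subset_Ici_self)
  have hw := wSummable hq hq' hμ hη
  set C : ℝ := β * (1 - q ^ (1 / β)) * (1 - q) ^ (μ - 1) with hC
  refine Summable.of_norm_bounded
    (g := fun k => (|C| * U) * (qPoch q (q ^ μ) k / qPoch q q k * q ^ ((k : ℝ) * (η + 1))))
    (hw.mul_left _) (fun k => ?_)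
  have hw0 := (w_pos hq hq' hμ η k).le
  have hu : |u (EKpt q β t k)| ≤ U := by
    have := hU _ (EKpt_mem hq hq' hβ ht k)
    simpa [Real.norm_eq_abs] using this
  rw [Real.norm_eq_abs, EKw, abs_mul, abs_mul]
  calc |C| * |qPoch q (q ^ μ) k / qPoch q q k * q ^ ((k : ℝ) * (η + 1))| * |u (EKpt q β t k)|
      = |C| * (qPoch q (q ^ μ) k / qPoch q q k * q ^ ((k : ℝ) * (η + 1))) * |u (EKpt q β t k)| := by
        rw [abs_of_nonneg hw0]
    _ ≤ |C| * (qPoch q (q ^ μ) k / qPoch q q k * q ^ ((k : ℝ) * (η + 1))) * U := by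
        refine mul_le_mul_of_nonneg_left hu (mul_nonneg (abs_nonneg _) hw0)
    _ = (|C| * U) * (qPoch q (q ^ μ) k / qPoch q q k * q ^ ((k : ℝ) * (η + 1))) := by ring


private lemma gruss_core (A B : ℕ → ℝ) (x y : ℕ → ℝ)
    (hA : Summable A) (hB : Summable B)
    (hA0 : ∀ k, 0 ≤ A k) (hB0 : ∀ j, 0 ≤ B j)
    (hx : ∀ k, 0 ≤ x k) (hy : ∀ j, 0 ≤ y j)
    (f g h : ℝ → ℝ) (ψ Ψ φ Φ ω Ω : ℝ)
    (hfb : ∀ s : ℝ, 0 ≤ s → ψ ≤ f s ∧ f s ≤ Ψ)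
    (hgb : ∀ s : ℝ, 0 ≤ s → φ ≤ g s ∧ g s ≤ Φ)
    (hhb : ∀ s : ℝ, 0 ≤ s → ω ≤ h s ∧ h s ≤ Ω) :
    |(∑' k, A k * (f (x k) * g (x k) * h (x k))) * (∑' j, B j)
        + (∑' k, A k * h (x k)) * (∑' j, B j * (f (y j) * g (y j)))
        + (∑' k, A k * g (x k)) * (∑' j, B j * (f (y j) * h (y j)))
        + (∑' k, A k * f (x k)) * (∑' j, B j * (g (y j) * h (y j)))
        - (∑' k, A k * (g (x k) * h (x k))) * (∑' j, B j * f (y j))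
        - (∑' k, A k * (f (x k) * h (x k))) * (∑' j, B j * g (y j))
        - (∑' k, A k * (f (x k) * g (x k))) * (∑' j, B j * h (y j))
        - (∑' k, A k) * (∑' j, B j * (f (y j) * g (y j) * h (y j)))|
      ≤ (∑' k, A k) * (∑' j, B j) * ((Ψ - ψ) * (Φ - φ) * (Ω - ω)) := by
  obtain ⟨hf1, hf2⟩ := hfb 0 le_rfl
  obtain ⟨hg1, hg2⟩ := hgb 0 le_rfl
  obtain ⟨hh1, hh2⟩ := hhb 0 le_rfl
  have hΨψ : (0:ℝ) ≤ Ψ - ψ := by linarith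
  have hΦφ : (0:ℝ) ≤ Φ - φ := by linarith
  have hΩω : (0:ℝ) ≤ Ω - ω := by linarith
  set M : ℝ := (Ψ - ψ) * (Φ - φ) * (Ω - ω) with hMdef
  have hM0 : 0 ≤ M := mul_nonneg (mul_nonneg hΨψ hΦφ) hΩω
  set Bf : ℝ := |ψ| ⊔ |Ψ| with hBfdef
  set Bg : ℝ := |φ| ⊔ |Φ| with hBgdef
  set Bh : ℝ := |ω| ⊔ |Ω| with hBhdef
  have hBf0 : 0 ≤ Bf := le_trans (abs_nonneg ψ) le_sup_left
  have hBg0 : 0 ≤ Bg := le_trans (abs_nonneg φ) le_sup_left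
  have hBh0 : 0 ≤ Bh := le_trans (abs_nonneg ω) le_sup_left
  have hfB : ∀ s : ℝ, 0 ≤ s → |f s| ≤ Bf := by
    intro s hs
    obtain ⟨h1, h2⟩ := hfb s hs
    rw [abs_le]
    refine ⟨?_, h2.trans (le_trans (le_abs_self Ψ) le_sup_right)⟩
    have h3 : -Bf ≤ -|ψ| := neg_le_neg le_sup_left
    have h4 := neg_abs_le ψ
    linarith
  have hgB : ∀ s : ℝ, 0 ≤ s → |g s| ≤ Bg := by
    intro s hs
    obtain ⟨h1, h2⟩ := hgb s hs
    rw [abs_le]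
    refine ⟨?_, h2.trans (le_trans (le_abs_self Φ) le_sup_right)⟩
    have h3 : -Bg ≤ -|φ| := neg_le_neg le_sup_left
    have h4 := neg_abs_le φ
    linarith
  have hhB : ∀ s : ℝ, 0 ≤ s → |h s| ≤ Bh := by
    intro s hs
    obtain ⟨h1, h2⟩ := hhb s hs
    rw [abs_le]
    refine ⟨?_, h2.trans (le_trans (le_abs_self Ω) le_sup_right)⟩
    have h3 : -Bh ≤ -|ω| := neg_le_neg le_sup_left
    have h4 := neg_abs_le ω
    linarith
  have hfgB : ∀ s : ℝ, 0 ≤ s → |f s * g s| ≤ Bf * Bg := fun s hs => by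
    rw [abs_mul]; exact mul_le_mul (hfB s hs) (hgB s hs) (abs_nonneg _) hBf0
  have hfhB : ∀ s : ℝ, 0 ≤ s → |f s * h s| ≤ Bf * Bh := fun s hs => by
    rw [abs_mul]; exact mul_le_mul (hfB s hs) (hhB s hs) (abs_nonneg _) hBf0
  have hghB : ∀ s : ℝ, 0 ≤ s → |g s * h s| ≤ Bg * Bh := fun s hs => by
    rw [abs_mul]; exact mul_le_mul (hgB s hs) (hhB s hs) (abs_nonneg _) hBg0
  have hfghB : ∀ s : ℝ, 0 ≤ s → |f s * g s * h s| ≤ Bf * Bg * Bh := fun s hs => by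
    rw [abs_mul]
    exact mul_le_mul (hfgB s hs) (hhB s hs) (abs_nonneg _) (mul_nonneg hBf0 hBg0)
  have sumA : ∀ (F : ℕ → ℝ) (C : ℝ), (∀ k, |F k| ≤ C) → Summable (fun k => A k * F k) := by
    intro F C hC
    refine Summable.of_norm_bounded (g := fun k => A k * C) (hA.mul_right C) (fun k => ?_)
    rw [Real.norm_eq_abs, abs_mul, abs_of_nonneg (hA0 k)]
    exact mul_le_mul_of_nonneg_left (hC k) (hA0 k)
  have sumB : ∀ (F : ℕ → ℝ) (C : ℝ), (∀ j, |F j| ≤ C) → Summable (fun j => B j * F j) := by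
    intro F C hC
    refine Summable.of_norm_bounded (g := fun j => B j * C) (hB.mul_right C) (fun j => ?_)
    rw [Real.norm_eq_abs, abs_mul, abs_of_nonneg (hB0 j)]
    exact mul_le_mul_of_nonneg_left (hC j) (hB0 j)
  have hPb : ∀ a b : ℝ, 0 ≤ a → 0 ≤ b →
      |(f a - f b) * (g a - g b) * (h a - h b)| ≤ M := by
    intro a b ha hb
    obtain ⟨ha1, ha2⟩ := hfb a ha; obtain ⟨hb1, hb2⟩ := hfb b hb
    obtain ⟨hc1, hc2⟩ := hgb a ha; obtain ⟨hd1, hd2⟩ := hgb b hb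
    obtain ⟨he1, he2⟩ := hhb a ha; obtain ⟨hk1, hk2⟩ := hhb b hb
    have e1 : |f a - f b| ≤ Ψ - ψ := abs_sub_le_iff.mpr ⟨by linarith, by linarith⟩
    have e2 : |g a - g b| ≤ Φ - φ := abs_sub_le_iff.mpr ⟨by linarith, by linarith⟩
    have e3 : |h a - h b| ≤ Ω - ω := abs_sub_le_iff.mpr ⟨by linarith, by linarith⟩
    rw [hMdef, abs_mul, abs_mul]
    exact mul_le_mul (mul_le_mul e1 e2 (abs_nonneg _) hΨψ) e3 (abs_nonneg _)
      (mul_nonneg hΨψ hΦφ)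
  -- j-level sums
  set SB := ∑' j, B j with hSBdef
  set Sf := ∑' j, B j * f (y j) with hSfdef
  set Sg := ∑' j, B j * g (y j) with hSgdef
  set Sh := ∑' j, B j * h (y j) with hShdef
  set Sfg := ∑' j, B j * (f (y j) * g (y j)) with hSfgdef
  set Sfh := ∑' j, B j * (f (y j) * h (y j)) with hSfhdef
  set Sgh := ∑' j, B j * (g (y j) * h (y j)) with hSghdef
  set Sfgh := ∑' j, B j * (f (y j) * g (y j) * h (y j)) with hSfghdef
  have HB : HasSum B SB := hB.hasSum
  have Hf : HasSum (fun j => B j * f (y j)) Sf :=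
    (sumB _ Bf fun j => hfB _ (hy j)).hasSum
  have Hg : HasSum (fun j => B j * g (y j)) Sg :=
    (sumB _ Bg fun j => hgB _ (hy j)).hasSum
  have Hh : HasSum (fun j => B j * h (y j)) Sh :=
    (sumB _ Bh fun j => hhB _ (hy j)).hasSum
  have Hfg : HasSum (fun j => B j * (f (y j) * g (y j))) Sfg :=
    (sumB _ (Bf * Bg) fun j => hfgB _ (hy j)).hasSum
  have Hfh : HasSum (fun j => B j * (f (y j) * h (y j))) Sfh :=
    (sumB _ (Bf * Bh) fun j => hfhB _ (hy j)).hasSum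
  have Hgh : HasSum (fun j => B j * (g (y j) * h (y j))) Sgh :=
    (sumB _ (Bg * Bh) fun j => hghB _ (hy j)).hasSum
  have Hfgh : HasSum (fun j => B j * (f (y j) * g (y j) * h (y j))) Sfgh :=
    (sumB _ (Bf * Bg * Bh) fun j => hfghB _ (hy j)).hasSum
  have hQsum : ∀ s : ℝ, 0 ≤ s → Summable
      (fun j => B j * ((f s - f (y j)) * (g s - g (y j)) * (h s - h (y j)))) := by
    intro s hs
    exact sumB _ M (fun j => hPb s (y j) hs (hy j))
  have hQb : ∀ s : ℝ, 0 ≤ s →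
      |∑' j, B j * ((f s - f (y j)) * (g s - g (y j)) * (h s - h (y j)))| ≤ SB * M := by
    intro s hs
    have hs1 : Summable (fun j => ‖B j * ((f s - f (y j)) * (g s - g (y j)) * (h s - h (y j)))‖) := by
      simpa only [Real.norm_eq_abs] using (hQsum s hs).abs
    have h1 : |∑' j, B j * ((f s - f (y j)) * (g s - g (y j)) * (h s - h (y j)))|
        ≤ ∑' j, |B j * ((f s - f (y j)) * (g s - g (y j)) * (h s - h (y j)))| := by
      simpa only [Real.norm_eq_abs] using norm_tsum_le_tsum_norm hs1
    have h2 : (∑' j, |B j * ((f s - f (y j)) * (g s - g (y j)) * (h s - h (y j)))|)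
        ≤ ∑' j, B j * M := by
      refine Summable.tsum_le_tsum (fun j => ?_) (hQsum s hs).abs (hB.mul_right M)
      rw [abs_mul, abs_of_nonneg (hB0 j)]
      exact mul_le_mul_of_nonneg_left (hPb s (y j) hs (hy j)) (hB0 j)
    have h3 : (∑' j, B j * M) = SB * M := tsum_mul_right
    linarith
  have hQexp : ∀ s : ℝ, 0 ≤ s →
      (∑' j, B j * ((f s - f (y j)) * (g s - g (y j)) * (h s - h (y j))))
        = f s * g s * h s * SB - f s * g s * Sh - f s * h s * Sg + f s * Sgh
          - g s * h s * Sf + g s * Sfh + h s * Sfg - Sfgh := by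
    intro s hs
    have Hc := (((((((HB.mul_left (f s * g s * h s)).sub (Hh.mul_left (f s * g s))).sub
        (Hg.mul_left (f s * h s))).add (Hgh.mul_left (f s))).sub
        (Hf.mul_left (g s * h s))).add (Hfh.mul_left (g s))).add
        (Hfg.mul_left (h s))).sub Hfgh
    have heq : (fun j => B j * ((f s - f (y j)) * (g s - g (y j)) * (h s - h (y j))))
        = fun j => f s * g s * h s * B j - f s * g s * (B j * h (y j))
          - f s * h s * (B j * g (y j)) + f s * (B j * (g (y j) * h (y j)))
          - g s * h s * (B j * f (y j)) + g s * (B j * (f (y j) * h (y j)))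
          + h s * (B j * (f (y j) * g (y j))) - B j * (f (y j) * g (y j) * h (y j)) := by
      funext j; ring
    rw [heq]
    exact Hc.tsum_eq
  -- k-level sums
  set TA := ∑' k, A k with hTAdef
  set Tf := ∑' k, A k * f (x k) with hTfdef
  set Tg := ∑' k, A k * g (x k) with hTgdef
  set Th := ∑' k, A k * h (x k) with hThdef
  set Tfg := ∑' k, A k * (f (x k) * g (x k)) with hTfgdef
  set Tfh := ∑' k, A k * (f (x k) * h (x k)) with hTfhdef
  set Tgh := ∑' k, A k * (g (x k) * h (x k)) with hTghdef
  set Tfgh := ∑' k, A k * (f (x k) * g (x k) * h (x k)) with hTfghdef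
  have KA : HasSum A TA := hA.hasSum
  have Kf : HasSum (fun k => A k * f (x k)) Tf :=
    (sumA _ Bf fun k => hfB _ (hx k)).hasSum
  have Kg : HasSum (fun k => A k * g (x k)) Tg :=
    (sumA _ Bg fun k => hgB _ (hx k)).hasSum
  have Kh : HasSum (fun k => A k * h (x k)) Th :=
    (sumA _ Bh fun k => hhB _ (hx k)).hasSum
  have Kfg : HasSum (fun k => A k * (f (x k) * g (x k))) Tfg :=
    (sumA _ (Bf * Bg) fun k => hfgB _ (hx k)).hasSum
  have Kfh : HasSum (fun k => A k * (f (x k) * h (x k))) Tfh :=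
    (sumA _ (Bf * Bh) fun k => hfhB _ (hx k)).hasSum
  have Kgh : HasSum (fun k => A k * (g (x k) * h (x k))) Tgh :=
    (sumA _ (Bg * Bh) fun k => hghB _ (hx k)).hasSum
  have Kfgh : HasSum (fun k => A k * (f (x k) * g (x k) * h (x k))) Tfgh :=
    (sumA _ (Bf * Bg * Bh) fun k => hfghB _ (hx k)).hasSum
  have Hcomb : HasSum
      (fun k => A k * (f (x k) * g (x k) * h (x k)) * SB
        + A k * h (x k) * Sfg + A k * g (x k) * Sfh + A k * f (x k) * Sgh
        - A k * (g (x k) * h (x k)) * Sf - A k * (f (x k) * h (x k)) * Sg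
        - A k * (f (x k) * g (x k)) * Sh - A k * Sfgh)
      (Tfgh * SB + Th * Sfg + Tg * Sfh + Tf * Sgh - Tgh * Sf - Tfh * Sg - Tfg * Sh
        - TA * Sfgh) :=
    (((((((Kfgh.mul_right SB).add (Kh.mul_right Sfg)).add (Kg.mul_right Sfh)).add
      (Kf.mul_right Sgh)).sub (Kgh.mul_right Sf)).sub (Kfh.mul_right Sg)).sub
      (Kfg.mul_right Sh)).sub (KA.mul_right Sfgh)
  have hfun : (fun k => A k * (f (x k) * g (x k) * h (x k)) * SB
        + A k * h (x k) * Sfg + A k * g (x k) * Sfh + A k * f (x k) * Sgh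
        - A k * (g (x k) * h (x k)) * Sf - A k * (f (x k) * h (x k)) * Sg
        - A k * (f (x k) * g (x k)) * Sh - A k * Sfgh)
      = fun k => A k * (∑' j, B j * ((f (x k) - f (y j)) * (g (x k) - g (y j)) *
          (h (x k) - h (y j)))) := by
    funext k
    rw [hQexp (x k) (hx k)]
    ring
  rw [hfun] at Hcomb
  rw [← Hcomb.tsum_eq]
  have KQ : Summable (fun k => A k * (∑' j, B j * ((f (x k) - f (y j)) * (g (x k) - g (y j)) *
      (h (x k) - h (y j))))) :=
    sumA _ (SB * M) fun k => hQb (x k) (hx k)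
  have ks1 : Summable (fun k => ‖A k * (∑' j, B j * ((f (x k) - f (y j)) * (g (x k) - g (y j)) *
      (h (x k) - h (y j))))‖) := by
    simpa only [Real.norm_eq_abs] using KQ.abs
  have h1 : |∑' k, A k * (∑' j, B j * ((f (x k) - f (y j)) * (g (x k) - g (y j)) *
        (h (x k) - h (y j))))|
      ≤ ∑' k, |A k * (∑' j, B j * ((f (x k) - f (y j)) * (g (x k) - g (y j)) *
        (h (x k) - h (y j))))| := by
    simpa only [Real.norm_eq_abs] using norm_tsum_le_tsum_norm ks1
  have h2 : (∑' k, |A k * (∑' j, B j * ((f (x k) - f (y j)) * (g (x k) - g (y j)) *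
        (h (x k) - h (y j))))|)
      ≤ ∑' k, A k * (SB * M) := by
    refine Summable.tsum_le_tsum (fun k => ?_) KQ.abs (hA.mul_right _)
    rw [abs_mul, abs_of_nonneg (hA0 k)]
    exact mul_le_mul_of_nonneg_left (hQb (x k) (hx k)) (hA0 k)
  have h3 : (∑' k, A k * (SB * M)) = TA * (SB * M) := tsum_mul_right
  have h4 : TA * (SB * M) = TA * SB * M := by ring
  linarith


theorem thm4
    (q₁ q₂ β δ μ ν η ζ : ℝ)
    (hq₁ : 0 < q₁) (hq₁' : q₁ < 1) (hq₂ : 0 < q₂) (hq₂' : q₂ < 1)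
    (hβ : 0 < β) (hδ : 0 < δ) (hμ : 0 < μ) (hν : 0 < ν)
    (hη : -1 < η) (hζ : -1 < ζ)
    (f g h u : ℝ → ℝ)
    (hcf : ContinuousOn f (Set.Ici 0))
    (hcg : ContinuousOn g (Set.Ici 0))
    (hch : ContinuousOn h (Set.Ici 0))
    (hcu : ContinuousOn u (Set.Ici 0))
    (hfg : Synchronous f g) (hfh : Synchronous f h) (hgh : Synchronous g h)
    (hu0 : ∀ x : ℝ, 0 ≤ x → 0 ≤ u x)
    (ψ Ψ φ Φ ω Ω : ℝ)
    (hfb : ∀ x : ℝ, 0 ≤ x → ψ ≤ f x ∧ f x ≤ Ψ)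
    (hgb : ∀ x : ℝ, 0 ≤ x → φ ≤ g x ∧ g x ≤ Φ)
    (hhb : ∀ x : ℝ, 0 ≤ x → ω ≤ h x ∧ h x ≤ Ω)
    (t : ℝ) (ht : 0 < t) :
    |EK q₁ η μ β (fun s => u s * f s * g s * h s) t * EK q₂ ζ ν δ u t +
        EK q₁ η μ β (fun s => u s * h s) t * EK q₂ ζ ν δ (fun s => u s * f s * g s) t +
        EK q₁ η μ β (fun s => u s * g s) t * EK q₂ ζ ν δ (fun s => u s * f s * h s) t +
        EK q₁ η μ β (fun s => u s * f s) t * EK q₂ ζ ν δ (fun s => u s * g s * h s) t -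
        EK q₁ η μ β (fun s => u s * g s * h s) t * EK q₂ ζ ν δ (fun s => u s * f s) t -
        EK q₁ η μ β (fun s => u s * f s * h s) t * EK q₂ ζ ν δ (fun s => u s * g s) t -
        EK q₁ η μ β (fun s => u s * f s * g s) t * EK q₂ ζ ν δ (fun s => u s * h s) t -
        EK q₁ η μ β u t * EK q₂ ζ ν δ (fun s => u s * f s * g s * h s) t|
      ≤ EK q₁ η μ β u t * EK q₂ ζ ν δ u t * ((Ψ - ψ) * (Φ - φ) * (Ω - ω)) := by
  rw [EK_mul3 q₁ η μ β u f g h t, EK_self q₁ η μ β u t, EK_self q₂ ζ ν δ u t,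
      EK_mul1 q₁ η μ β u h t, EK_mul2 q₂ ζ ν δ u f g t,
      EK_mul1 q₁ η μ β u g t, EK_mul2 q₂ ζ ν δ u f h t,
      EK_mul1 q₁ η μ β u f t, EK_mul2 q₂ ζ ν δ u g h t,
      EK_mul2 q₁ η μ β u g h t, EK_mul1 q₂ ζ ν δ u f t,
      EK_mul2 q₁ η μ β u f h t, EK_mul1 q₂ ζ ν δ u g t,
      EK_mul2 q₁ η μ β u f g t, EK_mul1 q₂ ζ ν δ u h t,
      EK_mul3 q₂ ζ ν δ u f g h t]
  exact gruss_core (EKw q₁ η μ β u t) (EKw q₂ ζ ν δ u t) (EKpt q₁ β t) (EKpt q₂ δ t)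
    (EKw_summable u hq₁ hq₁' hβ hμ hη hcu ht) (EKw_summable u hq₂ hq₂' hδ hν hζ hcu ht)
    (fun k => EKw_nonneg u hq₁ hq₁' hβ hμ hu0 ht.le k)
    (fun j => EKw_nonneg u hq₂ hq₂' hδ hν hu0 ht.le j)
    (fun k => (EKpt_mem hq₁ hq₁' hβ ht k).1)
    (fun j => (EKpt_mem hq₂ hq₂' hδ ht j).1)
    f g h ψ Ψ φ Φ ω Ω hfb hgb hhb
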